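/- Let M = X X† be a complex Wishart matrix where X is n×m (m ≥ n) with i.i.d. standard complex Gaussian entries. The probability that all eigenvalues of M lie in [a,b] ⊂ [0,∞) equals K · det(A(a,b)), where A(a,b) is the n×n matrix with entries a_{i,j} = ∫ₐᵇ t^{m+n−i−j} e^{−t} dt (the generalized incomplete gamma function γ(m+n−i−j+1; a, b)), and 1/K = ∏_{i=1}^{n} (m−i)! (n−i)!. -/

import Mathlib

open MeasureTheory Real

namespace WishartAux

open Finset Equiv

variable {n : ℕ}

/-! ### Algebraic preliminaries -/

noncomputable def G (p : ℕ) (x : Fin n → ℝ) : ℝ :=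
  (∏ i, Real.exp (-(x i)) * x i ^ p) * (Matrix.vandermonde x).det ^ 2

lemma sq_prod_sub (x : Fin n → ℝ) :
    (∏ i : Fin n, ∏ j ∈ Finset.Ioi i, (x i - x j)) ^ 2 = (Matrix.vandermonde x).det ^ 2 := by
  rw [Matrix.det_vandermonde, ← Finset.prod_pow, ← Finset.prod_pow]
  refine Finset.prod_congr rfl fun i _ => ?_
  rw [← Finset.prod_pow, ← Finset.prod_pow]
  exact Finset.prod_congr rfl fun j _ => by ring

lemma G_perm (p : ℕ) (σ : Equiv.Perm (Fin n)) (x : Fin n → ℝ) :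
    G p (fun i => x (σ i)) = G p x := by
  unfold G
  congr 1
  · exact Equiv.prod_comp σ (fun i => Real.exp (-(x i)) * x i ^ p)
  · have h : Matrix.vandermonde (fun i => x (σ i)) = (Matrix.vandermonde x).submatrix σ id := rfl
    rw [h, Matrix.det_permute, mul_pow]
    rcases Int.units_eq_one_or (Equiv.Perm.sign σ) with h' | h' <;> simp [h']

lemma det_vand (x : Fin n → ℝ) :
    (Matrix.vandermonde x).det
      = ∑ σ : Equiv.Perm (Fin n), (Equiv.Perm.sign σ : ℝ) * ∏ i, x i ^ ((σ i : Fin n) : ℕ) := by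
  rw [Matrix.det_apply']
  rw [← Equiv.sum_comp (Equiv.inv (Equiv.Perm (Fin n)))
    (fun σ => (Equiv.Perm.sign σ : ℝ) * ∏ i, x i ^ ((σ i : Fin n) : ℕ))]
  refine Finset.sum_congr rfl fun σ _ => ?_
  simp only [Equiv.inv_apply]
  rw [show (Equiv.Perm.sign σ⁻¹ : ℝ) = (Equiv.Perm.sign σ : ℝ) by simp]
  congr 1
  rw [← Equiv.prod_comp σ (fun j => x j ^ ((σ⁻¹ j : Fin n) : ℕ))]
  refine Finset.prod_congr rfl fun i _ => ?_
  simp [Matrix.vandermonde_apply]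

lemma sign_sq (σ : Equiv.Perm (Fin n)) :
    (Equiv.Perm.sign σ : ℝ) * (Equiv.Perm.sign σ : ℝ) = 1 := by
  rcases Int.units_eq_one_or (Equiv.Perm.sign σ) with h | h <;> simp [h]

lemma double_sum (c : ℕ → ℝ) :
    ∑ σ : Equiv.Perm (Fin n), ∑ τ : Equiv.Perm (Fin n),
        ((Equiv.Perm.sign σ : ℝ) * (Equiv.Perm.sign τ : ℝ)) * ∏ i, c ((σ i : ℕ) + (τ i : ℕ))
      = (Nat.factorial n : ℝ) * (Matrix.of fun i j : Fin n => c ((i : ℕ) + (j : ℕ))).det := by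
  have hinner : ∀ σ : Equiv.Perm (Fin n),
      ∑ τ : Equiv.Perm (Fin n),
          ((Equiv.Perm.sign σ : ℝ) * (Equiv.Perm.sign τ : ℝ)) * ∏ i, c ((σ i : ℕ) + (τ i : ℕ))
        = (Matrix.of fun i j : Fin n => c ((i : ℕ) + (j : ℕ))).det := by
    intro σ
    rw [← Equiv.sum_comp (Equiv.mulRight σ)
      (fun τ => ((Equiv.Perm.sign σ : ℝ) * (Equiv.Perm.sign τ : ℝ)) * ∏ i, c ((σ i : ℕ) + (τ i : ℕ)))]
    rw [Matrix.det_apply']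
    refine Finset.sum_congr rfl fun pp _ => ?_
    simp only [Equiv.coe_mulRight, Equiv.Perm.mul_apply]
    have hsign : (Equiv.Perm.sign σ : ℝ) * ((Equiv.Perm.sign (pp * σ) : ℝ)) = (Equiv.Perm.sign pp : ℝ) := by
      rw [Equiv.Perm.sign_mul]
      push_cast
      rw [show ((Equiv.Perm.sign pp : ℤ) : ℝ) * ((Equiv.Perm.sign σ : ℤ) : ℝ) = ((Equiv.Perm.sign σ : ℤ) : ℝ) * ((Equiv.Perm.sign pp : ℤ) : ℝ) from mul_comm _ _]
      rw [← mul_assoc]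
      have := sign_sq σ
      push_cast at this
      rw [this, one_mul]
    rw [hsign]
    congr 1
    rw [show (∏ x : Fin n, c ((σ x : ℕ) + ((pp (σ x) : Fin n) : ℕ))) = ∏ j : Fin n, c ((j : ℕ) + ((pp j : Fin n) : ℕ)) from Equiv.prod_comp σ (fun j : Fin n => c ((j : ℕ) + ((pp j : Fin n) : ℕ)))]
    refine Finset.prod_congr rfl fun i _ => ?_
    simp [Matrix.of_apply, add_comm]
  rw [Finset.sum_congr rfl fun σ _ => hinner σ, Finset.sum_const, Finset.card_univ,
    Fintype.card_perm, Fintype.card_fin, nsmul_eq_mul]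

lemma G_expand (p : ℕ) (x : Fin n → ℝ) :
    G p x = ∑ σ : Equiv.Perm (Fin n), ∑ τ : Equiv.Perm (Fin n),
      ((Equiv.Perm.sign σ : ℝ) * (Equiv.Perm.sign τ : ℝ)) *
        ∏ i, (Real.exp (-(x i)) * x i ^ (p + (((σ i : Fin n) : ℕ) + ((τ i : Fin n) : ℕ)))) := by
  unfold G
  rw [sq, det_vand, Finset.sum_mul_sum, Finset.mul_sum]
  refine Finset.sum_congr rfl fun σ _ => ?_
  rw [Finset.mul_sum]
  refine Finset.sum_congr rfl fun τ _ => ?_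
  have hprod : (∏ i, Real.exp (-(x i)) * x i ^ p)
        * ((∏ i, x i ^ ((σ i : Fin n) : ℕ)) * (∏ i, x i ^ ((τ i : Fin n) : ℕ)))
      = ∏ i, Real.exp (-(x i)) * x i ^ (p + (((σ i : Fin n) : ℕ) + ((τ i : Fin n) : ℕ))) := by
    rw [← Finset.prod_mul_distrib, ← Finset.prod_mul_distrib]
    refine Finset.prod_congr rfl fun i _ => ?_
    rw [pow_add, pow_add]; ring
  rw [← hprod]; ring

/-! ### Null sets and sorting permutations -/

lemma measure_pair (i j : Fin n) (hij : i ≠ j) :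
    volume {x : Fin n → ℝ | x i = x j} = 0 := by
  have h : {x : Fin n → ℝ | x i = x j} =
      (LinearMap.ker ((LinearMap.proj i : (Fin n → ℝ) →ₗ[ℝ] ℝ) - LinearMap.proj j) : Set (Fin n → ℝ)) := by
    ext x
    simp [LinearMap.mem_ker, sub_eq_zero, eq_comm]
  rw [h]
  apply Measure.addHaar_submodule
  intro htop
  have hx : (Pi.single i 1 : Fin n → ℝ) ∈
      LinearMap.ker ((LinearMap.proj i : (Fin n → ℝ) →ₗ[ℝ] ℝ) - LinearMap.proj j) := by
    rw [htop]; trivial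
  simp only [LinearMap.mem_ker, LinearMap.sub_apply, LinearMap.proj_apply] at hx
  rw [Pi.single_eq_same, Pi.single_eq_of_ne (Ne.symm hij)] at hx
  norm_num at hx

lemma measure_nondistinct :
    volume {x : Fin n → ℝ | ∃ i j, i ≠ j ∧ x i = x j} = 0 := by
  refine measure_mono_null (fun x hx => ?_)
    (measure_iUnion_null fun i : Fin n => measure_iUnion_null fun j : Fin n =>
      measure_iUnion_null fun hij : i ≠ j => measure_pair i j hij)
  obtain ⟨i, j, hij, h⟩ := hx
  exact Set.mem_iUnion.2 ⟨i, Set.mem_iUnion.2 ⟨j, Set.mem_iUnion.2 ⟨hij, h⟩⟩⟩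

lemma exists_perm (x : Fin n → ℝ) (hx : Function.Injective x) :
    ∃ σ : Equiv.Perm (Fin n), ∀ i j, i < j → x (σ j) < x (σ i) := by
  refine ⟨Fin.revPerm.trans (Tuple.sort x), fun i j hij => ?_⟩
  have hmono : StrictMono (x ∘ Tuple.sort x) :=
    (Tuple.monotone_sort x).strictMono_of_injective (hx.comp (Equiv.injective _))
  simp only [Equiv.trans_apply, Fin.revPerm_apply]
  exact hmono (Fin.rev_lt_rev.2 hij)

lemma inj_of_perm {x : Fin n → ℝ} {σ : Equiv.Perm (Fin n)}
    (hσ : ∀ i j, i < j → x (σ j) < x (σ i)) : Function.Injective x := by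
  intro i j hij
  by_contra h
  rcases lt_or_gt_of_ne (fun e : σ⁻¹ i = σ⁻¹ j => h (by simpa using congrArg σ e)) with hc | hc
  · have := hσ _ _ hc; simp [hij] at this
  · have := hσ _ _ hc; simp [hij] at this

lemma perm_unique {x : Fin n → ℝ} {σ τ : Equiv.Perm (Fin n)}
    (hσ : ∀ i j, i < j → x (σ j) < x (σ i)) (hτ : ∀ i j, i < j → x (τ j) < x (τ i)) :
    σ = τ := by
  have hx : Function.Injective x := inj_of_perm hσ
  have key : ∀ ρ : Equiv.Perm (Fin n), (∀ i j, i < j → x (ρ j) < x (ρ i)) →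
      Monotone (x ∘ (Fin.revPerm.trans ρ)) := by
    intro ρ hρ
    have : StrictMono (x ∘ (Fin.revPerm.trans ρ)) := by
      intro i j hij
      simp only [Function.comp_apply, Equiv.trans_apply, Fin.revPerm_apply]
      exact hρ _ _ (Fin.rev_lt_rev.2 hij)
    exact this.monotone
  have h2 := Tuple.unique_monotone (key σ hσ) (key τ hτ)
  have h3 : ∀ k, σ k = τ k := by
    intro k
    have := congrFun h2 (Fin.rev k)
    simp only [Function.comp_apply, Equiv.trans_apply, Fin.revPerm_apply, Fin.rev_rev] at this
    exact hx this
  exact Equiv.ext h3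

/-! ### Measure-preserving permutations of coordinates -/

lemma perm_eq_piCongrLeft (σ : Equiv.Perm (Fin n)) :
    (fun (x : Fin n → ℝ) (i : Fin n) => x (σ.symm i))
      = ⇑(MeasurableEquiv.piCongrLeft (fun _ : Fin n => ℝ) σ) := by
  funext x
  funext j
  rw [MeasurableEquiv.coe_piCongrLeft]
  conv_rhs => rw [show j = σ (σ.symm j) by simp]
  rw [Equiv.piCongrLeft_apply_apply]

lemma mp (σ : Equiv.Perm (Fin n)) :
    MeasurePreserving (fun (x : Fin n → ℝ) (i : Fin n) => x (σ.symm i)) volume volume := by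
  rw [perm_eq_piCongrLeft σ]
  exact MeasureTheory.volume_measurePreserving_piCongrLeft (fun _ : Fin n => ℝ) σ

lemma setIntegral_perm (σ : Equiv.Perm (Fin n)) (f : (Fin n → ℝ) → ℝ) (s : Set (Fin n → ℝ)) :
    ∫ x in (fun (x : Fin n → ℝ) (i : Fin n) => x (σ.symm i)) ⁻¹' s,
      f (fun i => x (σ.symm i)) = ∫ x in s, f x := by
  have hemb : MeasurableEmbedding (fun (x : Fin n → ℝ) (i : Fin n) => x (σ.symm i)) := by
    rw [perm_eq_piCongrLeft σ]
    exact (MeasurableEquiv.piCongrLeft (fun _ : Fin n => ℝ) σ).measurableEmbedding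
  exact (mp σ).setIntegral_preimage_emb hemb f s

/-! ### The ordered regions -/

def box (n : ℕ) (a b : ℝ) : Set (Fin n → ℝ) := Set.univ.pi fun _ => Set.Icc a b

def Aset (a b : ℝ) (σ : Equiv.Perm (Fin n)) : Set (Fin n → ℝ) :=
  box n a b ∩ {x | ∀ i j, i < j → x (σ j) < x (σ i)}

lemma measurableSet_box (a b : ℝ) : MeasurableSet (box n a b) :=
  MeasurableSet.univ_pi fun _ => measurableSet_Icc

lemma isCompact_box (a b : ℝ) : IsCompact (box n a b) :=
  isCompact_univ_pi fun _ => isCompact_Icc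

lemma measurableSet_Aset (a b : ℝ) (σ : Equiv.Perm (Fin n)) :
    MeasurableSet (Aset a b σ) := by
  refine (measurableSet_box a b).inter ?_
  have h : {x : Fin n → ℝ | ∀ i j, i < j → x (σ j) < x (σ i)}
      = ⋂ (i : Fin n) (j : Fin n) (_ : i < j), {x : Fin n → ℝ | x (σ j) < x (σ i)} := by
    ext x; simp [Set.mem_iInter]
  rw [h]
  exact MeasurableSet.iInter fun i => MeasurableSet.iInter fun j =>
    MeasurableSet.iInter fun _ => measurableSet_lt (measurable_pi_apply _) (measurable_pi_apply _)

lemma aset_disjoint (a b : ℝ) : Pairwise (Function.onFun Disjoint (Aset (n := n) a b)) := by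
  intro σ τ hst
  refine Set.disjoint_left.2 fun x hxσ hxτ => hst ?_
  exact perm_unique hxσ.2 hxτ.2

lemma preimage_Aset (a b : ℝ) (σ : Equiv.Perm (Fin n)) :
    (fun (x : Fin n → ℝ) (i : Fin n) => x (σ.symm i)) ⁻¹' (Aset a b σ) = Aset a b 1 := by
  ext x
  simp only [Set.mem_preimage, Aset, box, Set.mem_inter_iff, Set.mem_univ_pi, Set.mem_setOf_eq,
    Equiv.symm_apply_apply, Equiv.Perm.coe_one, id_eq]
  constructor
  · rintro ⟨h1, h2⟩
    refine ⟨fun i => by simpa using h1 (σ i), fun i j hij => ?_⟩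
    simpa using h2 i j hij
  · rintro ⟨h1, h2⟩
    refine ⟨fun i => h1 (σ.symm i), fun i j hij => ?_⟩
    simpa using h2 i j hij

lemma integral_box_decomp (a b : ℝ) (f : (Fin n → ℝ) → ℝ) (hf : Continuous f)
    (hinv : ∀ (σ : Equiv.Perm (Fin n)) (x : Fin n → ℝ), f (fun i => x (σ i)) = f x) :
    ∫ x in box n a b, f x = (Nat.factorial n : ℝ) * ∫ x in Aset a b 1, f x := by
  have hint : IntegrableOn f (box n a b) := hf.continuousOn.integrableOn_compact (isCompact_box a b)
  have hsub : ∀ σ : Equiv.Perm (Fin n), Aset a b σ ⊆ box n a b := fun σ => Set.inter_subset_left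
  have hae : box n a b =ᵐ[volume] ⋃ σ : Equiv.Perm (Fin n), Aset a b σ := by
    rw [MeasureTheory.ae_eq_set]
    constructor
    · refine measure_mono_null (fun x hx => ?_) measure_nondistinct
      obtain ⟨hxbox, hxn⟩ := hx
      by_contra hne
      have hinj : Function.Injective x := by
        intro i j hij
        by_contra hij'
        exact hne ⟨i, j, hij', hij⟩
      obtain ⟨σ, hσ⟩ := exists_perm x hinj
      exact hxn (Set.mem_iUnion.2 ⟨σ, hxbox, hσ⟩)
    · have : (⋃ σ : Equiv.Perm (Fin n), Aset a b σ) \ box n a b = ∅ := by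
        rw [Set.diff_eq_empty]
        exact Set.iUnion_subset hsub
      rw [this]; simp
  rw [setIntegral_congr_set hae]
  rw [integral_iUnion_fintype (measurableSet_Aset a b) (aset_disjoint a b)
    (fun σ => hint.mono_set (hsub σ))]
  have heach : ∀ σ : Equiv.Perm (Fin n), ∫ x in Aset a b σ, f x = ∫ x in Aset a b 1, f x := by
    intro σ
    calc ∫ x in Aset a b σ, f x
        = ∫ x in (fun (x : Fin n → ℝ) (i : Fin n) => x (σ.symm i)) ⁻¹' (Aset a b σ),
            f (fun i => x (σ.symm i)) := (setIntegral_perm σ f _).symm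
      _ = ∫ x in Aset a b 1, f (fun i => x (σ.symm i)) := by rw [preimage_Aset]
      _ = ∫ x in Aset a b 1, f x := by simp only [hinv σ.symm]
  rw [Finset.sum_congr rfl fun σ _ => heach σ, Finset.sum_const, Finset.card_univ,
    Fintype.card_perm, Fintype.card_fin, nsmul_eq_mul]

/-! ### Fubini over the box -/

lemma integral_box_prod (a b : ℝ) (g : Fin n → ℝ → ℝ) :
    ∫ x in box n a b, ∏ i, g i (x i) = ∏ i, ∫ t in Set.Icc a b, g i t := by
  rw [← MeasureTheory.integral_indicator (measurableSet_box a b)]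
  have h : (box n a b).indicator (fun x => ∏ i, g i (x i))
      = fun x => ∏ i, (Set.Icc a b).indicator (g i) (x i) := by
    funext x
    by_cases hx : x ∈ box n a b
    · rw [Set.indicator_of_mem hx]
      refine Finset.prod_congr rfl fun i _ => ?_
      rw [Set.indicator_of_mem (hx i (Set.mem_univ i))]
    · rw [Set.indicator_of_notMem hx]
      have hex : ∃ i, x i ∉ Set.Icc a b := by
        by_contra h'
        push_neg at h'
        exact hx fun i _ => h' i
      obtain ⟨i, hi⟩ := hex
      exact (Finset.prod_eq_zero (Finset.mem_univ i) (Set.indicator_of_notMem hi _)).symm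
  rw [h, MeasureTheory.integral_fintype_prod_volume_eq_prod]
  exact Finset.prod_congr rfl fun i _ => MeasureTheory.integral_indicator measurableSet_Icc

/-! ### Continuity -/

lemma continuous_G (p : ℕ) : Continuous (G (n := n) p) := by
  have hdet : Continuous fun x : Fin n → ℝ => (Matrix.vandermonde x).det := by
    have h : (fun x : Fin n → ℝ => (Matrix.vandermonde x).det)
        = fun x => ∑ σ : Equiv.Perm (Fin n), (Equiv.Perm.sign σ : ℝ) * ∏ i, x i ^ ((σ i : Fin n) : ℕ) :=
      funext det_vand
    rw [h]
    exact continuous_finset_sum _ fun σ _ => continuous_const.mul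
      (continuous_finset_prod _ fun i _ => (continuous_apply i).pow _)
  exact (continuous_finset_prod _ fun i _ =>
    ((Real.continuous_exp.comp (continuous_apply i).neg).mul ((continuous_apply i).pow p))).mul
    (hdet.pow 2)

/-! ### Integral of `G` over the box -/

lemma integral_box_G (a b : ℝ) (p : ℕ) :
    ∫ x in box n a b, G p x
      = (Nat.factorial n : ℝ) * (Matrix.of fun i j : Fin n =>
          ∫ t in Set.Icc a b, Real.exp (-t) * t ^ (p + ((i : ℕ) + (j : ℕ)))).det := by
  have hterm : ∀ σ τ : Equiv.Perm (Fin n),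
      IntegrableOn (fun x : Fin n → ℝ => ((Equiv.Perm.sign σ : ℝ) * (Equiv.Perm.sign τ : ℝ)) *
        ∏ i, (Real.exp (-(x i)) * x i ^ (p + (((σ i : Fin n) : ℕ) + ((τ i : Fin n) : ℕ)))))
        (box n a b) volume := by
    intro σ τ
    refine Continuous.continuousOn ?_ |>.integrableOn_compact (isCompact_box a b)
    exact continuous_const.mul (continuous_finset_prod _ fun i _ =>
      (Real.continuous_exp.comp (continuous_apply i).neg).mul ((continuous_apply i).pow _))
  calc ∫ x in box n a b, G p x
      = ∫ x in box n a b, ∑ σ : Equiv.Perm (Fin n), ∑ τ : Equiv.Perm (Fin n),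
          ((Equiv.Perm.sign σ : ℝ) * (Equiv.Perm.sign τ : ℝ)) *
            ∏ i, (Real.exp (-(x i)) * x i ^ (p + (((σ i : Fin n) : ℕ) + ((τ i : Fin n) : ℕ)))) := by
        simp only [G_expand]
    _ = ∑ σ : Equiv.Perm (Fin n), ∑ τ : Equiv.Perm (Fin n),
          ((Equiv.Perm.sign σ : ℝ) * (Equiv.Perm.sign τ : ℝ)) *
            ∏ i, ∫ t in Set.Icc a b,
              Real.exp (-t) * t ^ (p + (((σ i : Fin n) : ℕ) + ((τ i : Fin n) : ℕ))) := by
        rw [MeasureTheory.integral_finset_sum _ (fun σ _ => integrable_finset_sum _ (fun τ _ => hterm σ τ))]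
        refine Finset.sum_congr rfl fun σ _ => ?_
        rw [MeasureTheory.integral_finset_sum _ (fun τ _ => hterm σ τ)]
        refine Finset.sum_congr rfl fun τ _ => ?_
        rw [MeasureTheory.integral_const_mul]
        congr 1
        exact integral_box_prod a b (fun i t => Real.exp (-t) * t ^ (p + (((σ i : Fin n) : ℕ) + ((τ i : Fin n) : ℕ))))
    _ = (Nat.factorial n : ℝ) * (Matrix.of fun i j : Fin n =>
          ∫ t in Set.Icc a b, Real.exp (-t) * t ^ (p + ((i : ℕ) + (j : ℕ)))).det :=
        double_sum (fun k => ∫ t in Set.Icc a b, Real.exp (-t) * t ^ (p + k))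

end WishartAux

open WishartAux

/-- For a complex white Wishart matrix `M = X X†` (`X` is `n×m`, `m ≥ n`, i.i.d. standard
complex Gaussian entries), whose ordered-eigenvalue joint density is
`K ∏ᵢ e^(−xᵢ) xᵢ^(m−n) ∏_{i<j}(xᵢ−xⱼ)²` with `1/K = ∏_{i=1}^n (m−i)! (n−i)!`,
the probability that all eigenvalues lie in `[a,b] ⊂ [0,∞)` equals `K · det A(a,b)`
where `a_{i,j} = ∫ₐᵇ t^(m+n−i−j) e^(−t) dt`. -/
theorem complex_wishart_psi (n m : ℕ) (hn : 1 ≤ n) (hm : n ≤ m) (a b : ℝ)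
    (ha : 0 ≤ a) (hab : a ≤ b) :
    (∫ x in {x : Fin n → ℝ | (∀ i j : Fin n, i ≤ j → x j ≤ x i) ∧ ∀ i, x i ∈ Set.Icc a b},
        (∏ i ∈ Finset.range n, ((m - 1 - i).factorial * (n - 1 - i).factorial : ℝ))⁻¹ *
          ((∏ i, Real.exp (-(x i)) * x i ^ (m - n)) *
            (∏ i : Fin n, ∏ j ∈ Finset.Ioi i, (x i - x j)) ^ 2)) =
      (∏ i ∈ Finset.range n, ((m - 1 - i).factorial * (n - 1 - i).factorial : ℝ))⁻¹ *
        (Matrix.of fun i j : Fin n =>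
          ∫ t in a..b, t ^ (m + n - (i.1 + 1) - (j.1 + 1)) * Real.exp (-t)).det := by
  set K : ℝ := (∏ i ∈ Finset.range n, ((m - 1 - i).factorial * (n - 1 - i).factorial : ℝ))⁻¹
  set p : ℕ := m - n
  -- Step 1: rewrite the integrand via `G`
  have hpt : ∀ x : Fin n → ℝ,
      (∏ i, Real.exp (-(x i)) * x i ^ p) *
        (∏ i : Fin n, ∏ j ∈ Finset.Ioi i, (x i - x j)) ^ 2 = G p x := by
    intro x
    unfold WishartAux.G
    rw [sq_prod_sub]
  -- Step 2: the integration set is a.e. equal to `Aset a b 1`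
  have hS : {x : Fin n → ℝ | (∀ i j : Fin n, i ≤ j → x j ≤ x i) ∧ ∀ i, x i ∈ Set.Icc a b}
      =ᵐ[volume] Aset a b 1 := by
    rw [MeasureTheory.ae_eq_set]
    constructor
    · refine measure_mono_null (fun x hx => ?_) measure_nondistinct
      obtain ⟨⟨hord, hbox⟩, hnot⟩ := hx
      simp only [Aset, box, Set.mem_inter_iff, Set.mem_univ_pi, Set.mem_setOf_eq,
        Equiv.Perm.coe_one, id_eq, not_and] at hnot
      have := hnot (fun i => hbox i)
      push_neg at this
      obtain ⟨i, j, hij, hle⟩ := this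
      have heq : x i = x j := le_antisymm hle (hord i j hij.le)
      exact ⟨i, j, hij.ne, heq⟩
    · refine measure_mono_null (fun x hx => ?_) (measure_empty (μ := volume))
      · exfalso
        obtain ⟨⟨hbox, hord⟩, hnot⟩ := hx
        refine hnot ⟨fun i j hij => ?_, fun i => hbox i (Set.mem_univ i)⟩
        rcases eq_or_lt_of_le hij with rfl | hlt
        · exact le_refl _
        · exact (hord i j hlt).le
  simp only [hpt]
  rw [setIntegral_congr_set hS, MeasureTheory.integral_const_mul]
  congr 1
  have hdecomp := integral_box_decomp (n := n) a b (G p) (continuous_G p) (fun σ x => G_perm p σ x)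
  have hbox := integral_box_G (n := n) a b p
  have hfac : (Nat.factorial n : ℝ) ≠ 0 := Nat.cast_ne_zero.2 (Nat.factorial_ne_zero n)
  have hA1 : ∫ x in Aset a b 1, G p x
      = (Matrix.of fun i j : Fin n =>
          ∫ t in Set.Icc a b, Real.exp (-t) * t ^ (p + ((i : ℕ) + (j : ℕ)))).det :=
    mul_left_cancel₀ hfac (by rw [← hdecomp, hbox])
  rw [hA1]
  have hmat : (Matrix.of fun i j : Fin n =>
        ∫ t in a..b, t ^ (m + n - (i.1 + 1) - (j.1 + 1)) * Real.exp (-t))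
      = (Matrix.of fun i j : Fin n =>
          ∫ t in Set.Icc a b, Real.exp (-t) * t ^ (p + ((i : ℕ) + (j : ℕ)))).submatrix
            Fin.revPerm Fin.revPerm := by
    ext i j
    simp only [Matrix.of_apply, Matrix.submatrix_apply, Fin.revPerm_apply]
    rw [intervalIntegral.integral_of_le hab, ← MeasureTheory.integral_Icc_eq_integral_Ioc]
    have hexp : m + n - (i.1 + 1) - (j.1 + 1)
        = p + (((Fin.rev i : Fin n) : ℕ) + ((Fin.rev j : Fin n) : ℕ)) := by
      have hi := i.isLt
      have hj := j.isLt
      simp only [Fin.val_rev, p]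
      omega
    refine MeasureTheory.setIntegral_congr_fun measurableSet_Icc fun t _ => ?_
    rw [hexp]
    ring
  rw [hmat, Matrix.det_submatrix_equiv_self]
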